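/- Let E be a Hausdorff topological vector space over ℂ, let H be a closed linear subspace of E such that the quotient space E/H has finite dimension n ≥ 1, and let X be a subset of E such that H ∩ X is compact. Then for every n-dimensional linear subspace L of E with L ⊆ X, the quotient map q : E → E/H restricts to a linear bijection from L onto E/H. -/

import Mathlib

/-- Let `E` be a Hausdorff topological vector space over `ℂ`, `H` a closed subspace with
`dim (E/H) = n ≥ 1`, and `X ⊆ E` a subset with `H ∩ X` compact.  Then for every
`n`-dimensional subspace `L ⊆ X`, the quotient map `q : E → E/H` restricts to a linear
bijection from `L` onto `E/H`. -/
theorem quotient_map_bijective_on_fin_dim_subspace (E : Type*) [AddCommGroup E]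
    [Module ℂ E] [TopologicalSpace E] [IsTopologicalAddGroup E] [ContinuousSMul ℂ E]
    [T2Space E] (n : ℕ) (hn : 1 ≤ n)
    (H : Submodule ℂ E) (hHclosed : IsClosed (H : Set E))
    [FiniteDimensional ℂ (E ⧸ H)] (hHcodim : Module.finrank ℂ (E ⧸ H) = n)
    (X : Set E) (hHX : IsCompact ((H : Set E) ∩ X))
    (L : Submodule ℂ E) [FiniteDimensional ℂ L] (hLdim : Module.finrank ℂ L = n)
    (hLX : (L : Set E) ⊆ X) :
    Function.Bijective (H.mkQ.comp L.subtype) := by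
  have hinj : Function.Injective (H.mkQ.comp L.subtype) := by
    rw [← LinearMap.ker_eq_bot, Submodule.eq_bot_iff]
    rintro ⟨x, hxL⟩ hx
    simp only [LinearMap.mem_ker, LinearMap.comp_apply, Submodule.mkQ_apply,
      Submodule.subtype_apply, Submodule.Quotient.mk_eq_zero] at hx
    ext
    by_contra hx0
    let f : ℂ →ₗ[ℂ] E := LinearMap.toSpanSingleton ℂ E x
    have hker : LinearMap.ker f = ⊥ := LinearMap.ker_toSpanSingleton ℂ hx0
    have hemb := LinearMap.isClosedEmbedding_of_injective hker
    have hrange : Set.range f ⊆ (H : Set E) ∩ X := by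
      rintro _ ⟨c, rfl⟩
      exact ⟨H.smul_mem c hx, hLX (L.smul_mem c hxL)⟩
    have hcomp : IsCompact (Set.range f) :=
      hHX.of_isClosed_subset hemb.isClosed_range hrange
    have : IsCompact (Set.univ : Set ℂ) := by
      rw [hemb.isEmbedding.isCompact_iff]
      simpa [Set.image_univ] using hcomp
    exact noncompact_univ ℂ this
  exact ⟨hinj, (LinearMap.injective_iff_surjective_of_finrank_eq_finrank
    (hLdim.trans hHcodim.symm)).mp hinj⟩
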